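/- Let M be large, gcd(A,B,C) = 1, and d | AC - B². Then for any ε > 0, #{(m,n) : 1 ≤ m,n ≤ M, Am² + 2Bmn + Cn² ≡ 0 (mod d)} ≪_ε d^ε (M²/d^{1/2} + M). -/

import Mathlib

open Finset

lemma pow_half_dvd_of_pow_dvd_sq {p : ℕ} (hp : p.Prime) (e : ℕ) (x : ℤ)
    (h : (p:ℤ)^e ∣ x^2) : (p:ℤ)^((e+1)/2) ∣ x := by
  rcases eq_or_ne x 0 with rfl | hx
  · exact dvd_zero _
  · have hx' : x.natAbs ≠ 0 := Int.natAbs_ne_zero.mpr hx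
    have h' : p^e ∣ x.natAbs^2 := by
      have h2 := Int.natAbs_dvd_natAbs.mpr h
      simpa [Int.natAbs_pow] using h2
    have he : e ≤ (x.natAbs^2).factorization p :=
      (Nat.Prime.pow_dvd_iff_le_factorization hp (pow_ne_zero 2 hx')).mp h'
    rw [Nat.factorization_pow] at he
    simp at he
    have hf : (e+1)/2 ≤ x.natAbs.factorization p := by omega
    have h3 : p^((e+1)/2) ∣ x.natAbs :=
      (Nat.Prime.pow_dvd_iff_le_factorization hp hx').mpr hf
    have h4 : ((p^((e+1)/2) : ℕ) : ℤ) ∣ (x.natAbs : ℤ) := Int.natCast_dvd_natCast.mpr h3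
    have h5 : ((p^((e+1)/2) : ℕ) : ℤ) ∣ x := h4.trans (Int.natAbs_dvd.mpr dvd_rfl)
    push_cast at h5
    exact h5

lemma key_exists (A B C : ℤ) (h1 : Int.gcd A (Int.gcd B C) = 1) :
    ∀ d : ℕ, (d:ℤ) ∣ A*C - B^2 →
      ∃ (s : ℕ) (a b : ℤ), s ∣ d ∧ d ≤ s^2 ∧
        Int.gcd a ((Int.gcd b (s:ℤ) : ℕ) : ℤ) = 1 ∧
        ∀ m n : ℤ, (d:ℤ) ∣ (A*m^2 + 2*B*m*n + C*n^2) → (s:ℤ) ∣ a*m + b*n := by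
  intro d
  induction d using Nat.recOnPosPrimePosCoprime with
  | zero =>
    intro _
    exact ⟨1, 1, 0, Nat.one_dvd _, by norm_num, by simp, fun m n _ => by simp⟩
  | one =>
    intro _
    exact ⟨1, 1, 0, Nat.one_dvd _, by norm_num, by simp, fun m n _ => by simp⟩
  | prime_pow p e hp he =>
    intro hdvd
    have hpe1 : (p:ℤ) ∣ (p:ℤ)^e := dvd_pow_self (p:ℤ) he.ne'
    have hpd : (p:ℤ) ∣ A*C - B^2 := hpe1.trans (by exact_mod_cast hdvd)
    set f := (e+1)/2 with hf
    have hfe : f ≤ e := by omega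
    have he2f : e ≤ 2*f := by omega
    have hsd : p^f ∣ p^e := pow_dvd_pow p hfe
    have hds : p^e ≤ (p^f)^2 := by
      rw [← pow_mul]
      exact Nat.pow_le_pow_right hp.pos (by omega)
    by_cases hA : (p:ℤ) ∣ A
    · -- p ∣ A, hence p ∤ C; use (B, C)
      have hC : ¬ (p:ℤ) ∣ C := by
        intro hC
        have hB2 : (p:ℤ) ∣ B^2 := by
          have : (p:ℤ) ∣ A*C := hA.mul_right C
          have h6 : B^2 = A*C - (A*C - B^2) := by ring
          rw [h6]; exact dvd_sub this hpd
        have hB : (p:ℤ) ∣ B := Int.Prime.dvd_pow' (by exact_mod_cast hp) hB2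
        have hg : (p:ℤ) ∣ (Int.gcd B C : ℤ) := Int.dvd_coe_gcd hB hC
        have h7 : (p:ℤ) ∣ ((Int.gcd A (Int.gcd B C) : ℕ) : ℤ) := Int.dvd_coe_gcd hA hg
        rw [h1] at h7
        have := Int.le_of_dvd one_pos h7
        have := hp.two_le
        omega
      refine ⟨p^f, B, C, hsd, hds, ?_, ?_⟩
      · -- gcd B (gcd C p^f) = 1
        rw [Nat.eq_one_iff_not_exists_prime_dvd]
        intro q hq hqd
        have hq1 : ((q:ℕ):ℤ) ∣ B := (Int.natCast_dvd_natCast.mpr hqd).trans (Int.gcd_dvd_left _ _)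
        have hq2 : (q:ℤ) ∣ ((Int.gcd C ((p^f : ℕ):ℤ) : ℕ) : ℤ) :=
          (Int.natCast_dvd_natCast.mpr hqd).trans (Int.gcd_dvd_right _ _)
        have hq3 : (q:ℤ) ∣ ((p^f : ℕ):ℤ) := hq2.trans (Int.gcd_dvd_right _ _)
        have hq4 : q ∣ p^f := Int.natCast_dvd_natCast.mp (by exact_mod_cast hq3)
        have hqp : q = p := (Nat.prime_dvd_prime_iff_eq hq hp).mp (hq.dvd_of_dvd_pow hq4)
        have hqC : (q:ℤ) ∣ C := hq2.trans (Int.gcd_dvd_left _ _)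
        rw [hqp] at hqC
        exact hC hqC
      · intro m n hQ
        have hQ' : (p:ℤ)^e ∣ (B*m + C*n)^2 := by
          have hid : (B*m + C*n)^2 = C*(A*m^2+2*B*m*n+C*n^2) - (A*C - B^2)*m^2 := by ring
          rw [hid]
          have h8 : (p:ℤ)^e ∣ C*(A*m^2+2*B*m*n+C*n^2) := by
            have : ((p^e : ℕ):ℤ) ∣ A*m^2+2*B*m*n+C*n^2 := hQ
            push_cast at this
            exact this.mul_left C
          have h9 : (p:ℤ)^e ∣ (A*C - B^2)*m^2 := by
            have : ((p^e : ℕ):ℤ) ∣ A*C - B^2 := hdvd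
            push_cast at this
            exact this.mul_right _
          exact dvd_sub h8 h9
        have := pow_half_dvd_of_pow_dvd_sq hp e _ hQ'
        rw [← hf] at this
        exact_mod_cast this
    · -- p ∤ A; use (A, B)
      refine ⟨p^f, A, B, hsd, hds, ?_, ?_⟩
      · rw [Nat.eq_one_iff_not_exists_prime_dvd]
        intro q hq hqd
        have hq1 : (q:ℤ) ∣ A := (Int.natCast_dvd_natCast.mpr hqd).trans (Int.gcd_dvd_left _ _)
        have hq2 : (q:ℤ) ∣ ((Int.gcd B ((p^f : ℕ):ℤ) : ℕ) : ℤ) :=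
          (Int.natCast_dvd_natCast.mpr hqd).trans (Int.gcd_dvd_right _ _)
        have hq3 : (q:ℤ) ∣ ((p^f : ℕ):ℤ) := hq2.trans (Int.gcd_dvd_right _ _)
        have hq4 : q ∣ p^f := Int.natCast_dvd_natCast.mp (by exact_mod_cast hq3)
        have hqp : q = p := (Nat.prime_dvd_prime_iff_eq hq hp).mp (hq.dvd_of_dvd_pow hq4)
        rw [hqp] at hq1
        exact hA hq1
      · intro m n hQ
        have hQ' : (p:ℤ)^e ∣ (A*m + B*n)^2 := by
          have hid : (A*m + B*n)^2 = A*(A*m^2+2*B*m*n+C*n^2) - (A*C - B^2)*n^2 := by ring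
          rw [hid]
          have h8 : (p:ℤ)^e ∣ A*(A*m^2+2*B*m*n+C*n^2) := by
            have : ((p^e : ℕ):ℤ) ∣ A*m^2+2*B*m*n+C*n^2 := hQ
            push_cast at this
            exact this.mul_left A
          have h9 : (p:ℤ)^e ∣ (A*C - B^2)*n^2 := by
            have : ((p^e : ℕ):ℤ) ∣ A*C - B^2 := hdvd
            push_cast at this
            exact this.mul_right _
          exact dvd_sub h8 h9
        have := pow_half_dvd_of_pow_dvd_sq hp e _ hQ'
        rw [← hf] at this
        exact_mod_cast this
  | coprime d1 d2 hd1 hd2 hco ih1 ih2 =>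
    intro hdvd
    have hdd1 : ((d1:ℕ):ℤ) ∣ A*C - B^2 := by
      refine dvd_trans ?_ hdvd
      exact_mod_cast (Dvd.intro d2 rfl : (d1:ℕ) ∣ d1*d2)
    have hdd2 : ((d2:ℕ):ℤ) ∣ A*C - B^2 := by
      refine dvd_trans ?_ hdvd
      exact_mod_cast (Dvd.intro_left d1 rfl : (d2:ℕ) ∣ d1*d2)
    obtain ⟨s1, a1, b1, hs1d, hd1s, hg1, him1⟩ := ih1 hdd1
    obtain ⟨s2, a2, b2, hs2d, hd2s, hg2, him2⟩ := ih2 hdd2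
    have hcos : Nat.Coprime s1 s2 := Nat.Coprime.coprime_dvd_right hs2d
      (Nat.Coprime.coprime_dvd_left hs1d hco)
    have hic : IsCoprime (s1:ℤ) (s2:ℤ) := by
      rw [Int.isCoprime_iff_gcd_eq_one]
      simpa using hcos
    obtain ⟨u, v, huv⟩ := id hic
    refine ⟨s1*s2, a1*(v*s2) + a2*(u*s1), b1*(v*s2) + b2*(u*s1),
      mul_dvd_mul hs1d hs2d, ?_, ?_, ?_⟩
    · calc d1*d2 ≤ s1^2 * s2^2 := Nat.mul_le_mul hd1s hd2s
        _ = (s1*s2)^2 := by ring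
    · -- gcd condition
      set a := a1*(v*s2) + a2*(u*s1) with ha
      set b := b1*(v*s2) + b2*(u*s1) with hb
      have ha1 : (s1:ℤ) ∣ a - a1 := ⟨(a2 - a1)*u, by rw [ha]; linear_combination a1 * huv⟩
      have ha2 : (s2:ℤ) ∣ a - a2 := ⟨(a1 - a2)*v, by rw [ha]; linear_combination a2 * huv⟩
      have hb1 : (s1:ℤ) ∣ b - b1 := ⟨(b2 - b1)*u, by rw [hb]; linear_combination b1 * huv⟩
      have hb2 : (s2:ℤ) ∣ b - b2 := ⟨(b1 - b2)*v, by rw [hb]; linear_combination b2 * huv⟩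
      rw [Nat.eq_one_iff_not_exists_prime_dvd]
      intro q hq hqd
      have hqa : (q:ℤ) ∣ a := (Int.natCast_dvd_natCast.mpr hqd).trans (Int.gcd_dvd_left _ _)
      have hq2 : (q:ℤ) ∣ ((Int.gcd b (((s1*s2 : ℕ)):ℤ) : ℕ) : ℤ) :=
        (Int.natCast_dvd_natCast.mpr hqd).trans (Int.gcd_dvd_right _ _)
      have hqb : (q:ℤ) ∣ b := hq2.trans (Int.gcd_dvd_left _ _)
      have hqs' : (q:ℤ) ∣ ((s1*s2 : ℕ):ℤ) := hq2.trans (Int.gcd_dvd_right _ _)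
      have hqs : q ∣ s1*s2 := Int.natCast_dvd_natCast.mp (by exact_mod_cast hqs')
      rcases (Nat.Prime.dvd_mul hq).mp hqs with hqs1 | hqs2
      · have hqa1 : (q:ℤ) ∣ a1 := by
          have : (q:ℤ) ∣ a - a1 := (Int.natCast_dvd_natCast.mpr hqs1).trans ha1
          have h7 : a1 = a - (a - a1) := by ring
          rw [h7]; exact dvd_sub hqa this
        have hqb1 : (q:ℤ) ∣ b1 := by
          have : (q:ℤ) ∣ b - b1 := (Int.natCast_dvd_natCast.mpr hqs1).trans hb1
          have h7 : b1 = b - (b - b1) := by ring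
          rw [h7]; exact dvd_sub hqb this
        have : (q:ℤ) ∣ ((Int.gcd a1 ((Int.gcd b1 (s1:ℤ) : ℕ):ℤ) : ℕ) : ℤ) :=
          Int.dvd_coe_gcd hqa1 (Int.dvd_coe_gcd hqb1 (Int.natCast_dvd_natCast.mpr hqs1))
        rw [hg1] at this
        have := Int.le_of_dvd one_pos this
        have := hq.two_le
        omega
      · have hqa2 : (q:ℤ) ∣ a2 := by
          have : (q:ℤ) ∣ a - a2 := (Int.natCast_dvd_natCast.mpr hqs2).trans ha2
          have h7 : a2 = a - (a - a2) := by ring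
          rw [h7]; exact dvd_sub hqa this
        have hqb2 : (q:ℤ) ∣ b2 := by
          have : (q:ℤ) ∣ b - b2 := (Int.natCast_dvd_natCast.mpr hqs2).trans hb2
          have h7 : b2 = b - (b - b2) := by ring
          rw [h7]; exact dvd_sub hqb this
        have : (q:ℤ) ∣ ((Int.gcd a2 ((Int.gcd b2 (s2:ℤ) : ℕ):ℤ) : ℕ) : ℤ) :=
          Int.dvd_coe_gcd hqa2 (Int.dvd_coe_gcd hqb2 (Int.natCast_dvd_natCast.mpr hqs2))
        rw [hg2] at this
        have := Int.le_of_dvd one_pos this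
        have := hq.two_le
        omega
    · intro m n hQ
      set a := a1*(v*s2) + a2*(u*s1) with ha
      set b := b1*(v*s2) + b2*(u*s1) with hb
      have ha1 : (s1:ℤ) ∣ a - a1 := ⟨(a2 - a1)*u, by rw [ha]; linear_combination a1 * huv⟩
      have ha2 : (s2:ℤ) ∣ a - a2 := ⟨(a1 - a2)*v, by rw [ha]; linear_combination a2 * huv⟩
      have hb1 : (s1:ℤ) ∣ b - b1 := ⟨(b2 - b1)*u, by rw [hb]; linear_combination b1 * huv⟩
      have hb2 : (s2:ℤ) ∣ b - b2 := ⟨(b1 - b2)*v, by rw [hb]; linear_combination b2 * huv⟩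
      have hQ1 : ((d1:ℕ):ℤ) ∣ A*m^2+2*B*m*n+C*n^2 := by
        refine dvd_trans ?_ hQ
        exact_mod_cast (Dvd.intro d2 rfl : (d1:ℕ) ∣ d1*d2)
      have hQ2 : ((d2:ℕ):ℤ) ∣ A*m^2+2*B*m*n+C*n^2 := by
        refine dvd_trans ?_ hQ
        exact_mod_cast (Dvd.intro_left d1 rfl : (d2:ℕ) ∣ d1*d2)
      have hs1' : (s1:ℤ) ∣ a*m + b*n := by
        have hid : a*m + b*n = (a1*m + b1*n) + ((a - a1)*m + (b - b1)*n) := by ring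
        rw [hid]
        exact dvd_add (him1 m n hQ1) (dvd_add (ha1.mul_right m) (hb1.mul_right n))
      have hs2' : (s2:ℤ) ∣ a*m + b*n := by
        have hid : a*m + b*n = (a2*m + b2*n) + ((a - a2)*m + (b - b2)*n) := by ring
        rw [hid]
        exact dvd_add (him2 m n hQ2) (dvd_add (ha2.mul_right m) (hb2.mul_right n))
      have := hic.mul_dvd hs1' hs2'
      exact_mod_cast this

lemma div_eq_div_imp_eq (q n n' : ℕ) (hq : 0 < q) (hle : n ≤ n') (hdvd : q ∣ n' - n)
    (h2 : (n-1)/q = (n'-1)/q) (hn : 1 ≤ n) : n = n' := by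
  obtain ⟨k, hk⟩ := hdvd
  rcases Nat.eq_zero_or_pos k with rfl | hk0
  · omega
  · exfalso
    have h3 : n - 1 + q ≤ n' - 1 := by
      have hqk : q ≤ q * k := Nat.le_mul_of_pos_right q hk0
      omega
    have h4 : (n-1)/q + 1 = (n-1+q)/q := (Nat.add_div_right _ hq).symm
    have h5 : (n-1+q)/q ≤ (n'-1)/q := Nat.div_le_div_right h3
    omega

theorem count_quadratic_zeros_mod_d (ε : ℝ) (hε : 0 < ε) :
    ∃ K : ℝ, 0 < K ∧
      ∀ A B C : ℤ, Int.gcd A (Int.gcd B C) = 1 →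
        ∀ d : ℕ, 0 < d → (d : ℤ) ∣ A * C - B ^ 2 →
          ∀ M : ℕ,
            ((((Finset.Icc 1 M) ×ˢ (Finset.Icc 1 M)).filter
                (fun p : ℕ × ℕ =>
                  (d : ℤ) ∣ A * (p.1 : ℤ) ^ 2 + 2 * B * p.1 * p.2 + C * (p.2 : ℤ) ^ 2)).card
                : ℝ)
              ≤ K * (d : ℝ) ^ ε * ((M : ℝ) ^ 2 / (d : ℝ) ^ ((1 : ℝ) / 2) + (M : ℝ)) := by
  refine ⟨1, one_pos, ?_⟩
  intro A B C hg d hd hdvd M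
  obtain ⟨s, a, b, hsd, hds, hgcd, himp⟩ := key_exists A B C hg d
    (by have : A*C - B^2 = A*C - B^2 := rfl; exact_mod_cast hdvd)
  have hs0 : 0 < s := by
    rcases Nat.eq_zero_or_pos s with rfl | h
    · simp at hds; omega
    · exact h
  set t : ℕ := Int.gcd b (s:ℤ) with htdef
  have htb : (t:ℤ) ∣ b := (Int.gcd_dvd_left _ _)
  have hts' : (t:ℤ) ∣ (s:ℤ) := (Int.gcd_dvd_right _ _)
  have hts : t ∣ s := Int.natCast_dvd_natCast.mp hts'
  have ht0 : 0 < t := Nat.pos_of_dvd_of_pos hts hs0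
  set q : ℕ := s / t with hqdef
  have hstq : s = t * q := (Nat.mul_div_cancel' hts).symm
  have hq0 : 0 < q := by
    rcases Nat.eq_zero_or_pos q with h0 | h
    · rw [h0] at hstq; omega
    · exact h
  have hca : IsCoprime ((t:ℕ):ℤ) a := by
    rw [Int.isCoprime_iff_gcd_eq_one, Int.gcd_comm]
    exact hgcd
  have hsq' : ((s:ℤ)) / (t:ℤ) = ((q:ℕ):ℤ) := by
    rw [hqdef]
    exact (Int.natCast_ediv s t).symm
  have hcq : IsCoprime ((q:ℕ):ℤ) (b / (t:ℤ)) := by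
    rw [Int.isCoprime_iff_gcd_eq_one, Int.gcd_comm, ← hsq']
    exact Int.gcd_div_gcd_div_gcd ht0
  set S := (((Finset.Icc 1 M) ×ˢ (Finset.Icc 1 M)).filter
      (fun p : ℕ × ℕ =>
        (d : ℤ) ∣ A * (p.1 : ℤ) ^ 2 + 2 * B * p.1 * p.2 + C * (p.2 : ℤ) ^ 2)) with hS
  -- basic facts about members
  have hmem : ∀ p : ℕ × ℕ, p ∈ S →
      (s:ℤ) ∣ a*(p.1:ℤ) + b*(p.2:ℤ) ∧ t ∣ p.1 ∧ 1 ≤ p.1 ∧ p.1 ≤ M ∧ 1 ≤ p.2 ∧ p.2 ≤ M := by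
    rintro ⟨m, n⟩ hp
    obtain ⟨hmem', hcond⟩ := Finset.mem_filter.mp hp
    obtain ⟨h1', h2'⟩ := Finset.mem_product.mp hmem'
    obtain ⟨hm1, hm2⟩ := Finset.mem_Icc.mp h1'
    obtain ⟨hn1, hn2⟩ := Finset.mem_Icc.mp h2'
    have hcond' : ((d:ℕ):ℤ) ∣ A*(m:ℤ)^2 + 2*B*(m:ℤ)*(n:ℤ) + C*(n:ℤ)^2 := hcond
    have hsmn : (s:ℤ) ∣ a*(m:ℤ) + b*(n:ℤ) := himp _ _ hcond'
    refine ⟨hsmn, ?_, hm1, hm2, hn1, hn2⟩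
    have hbn : (t:ℤ) ∣ b*(n:ℤ) := htb.mul_right _
    have ham : (t:ℤ) ∣ a*(m:ℤ) := by
      have h3 : a*(m:ℤ) = (a*(m:ℤ)+b*(n:ℤ)) - b*(n:ℤ) := by ring
      rw [h3]; exact dvd_sub (hts'.trans hsmn) hbn
    have h4 : (t:ℤ) ∣ ((m:ℕ):ℤ) := hca.dvd_of_dvd_mul_left ham
    exact Int.natCast_dvd_natCast.mp h4
  -- difference of second coordinates
  have hdiff : ∀ p p' : ℕ × ℕ, p ∈ S → p' ∈ S → p.1 = p'.1 →
      ((q:ℕ):ℤ) ∣ (p.2:ℤ) - (p'.2:ℤ) := by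
    rintro ⟨m, n⟩ ⟨m', n'⟩ hp hp' (rfl : m = m')
    obtain ⟨hs1, -, -, -, -, -⟩ := hmem _ hp
    obtain ⟨hs2, -, -, -, -, -⟩ := hmem _ hp'
    have hsb : (s:ℤ) ∣ b*((n:ℤ) - (n':ℤ)) := by
      have h3 : b*((n:ℤ) - (n':ℤ)) = (a*(m:ℤ)+b*(n:ℤ)) - (a*(m:ℤ)+b*(n':ℤ)) := by ring
      rw [h3]; exact dvd_sub hs1 hs2
    have hbt : (t:ℤ) * (b / (t:ℤ)) = b := Int.mul_ediv_cancel' htb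
    have hstq' : (s:ℤ) = (t:ℤ) * (q:ℤ) := by exact_mod_cast congrArg (Nat.cast : ℕ → ℤ) hstq
    have h5 : (t:ℤ) * (q:ℤ) ∣ (t:ℤ) * ((b / (t:ℤ)) * ((n:ℤ) - (n':ℤ))) := by
      rw [← mul_assoc, hbt, ← hstq']
      exact hsb
    have h6 : ((q:ℕ):ℤ) ∣ (b / (t:ℤ)) * ((n:ℤ) - (n':ℤ)) :=
      (mul_dvd_mul_iff_left (show (t:ℤ) ≠ 0 by exact_mod_cast ht0.ne')).mp h5
    exact hcq.dvd_of_dvd_mul_left h6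
  -- cardinality bound
  have hcard : S.card ≤ (M/t) * ((M-1)/q + 1) := by
    have h7 : S.card ≤ ((Finset.Icc 1 (M/t)) ×ˢ (Finset.range ((M-1)/q + 1))).card := by
      apply Finset.card_le_card_of_injOn (fun p => (p.1 / t, (p.2 - 1) / q))
      · rintro ⟨m, n⟩ hp
        obtain ⟨-, htm, hm1, hm2, hn1, hn2⟩ := hmem _ hp
        rw [Finset.mem_coe, Finset.mem_product]
        constructor
        · rw [Finset.mem_Icc]
          exact ⟨(Nat.one_le_div_iff ht0).mpr (Nat.le_of_dvd (by omega) htm),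
            Nat.div_le_div_right hm2⟩
        · rw [Finset.mem_range]
          exact Nat.lt_succ_of_le (Nat.div_le_div_right (by omega))
      · rintro ⟨m, n⟩ hp ⟨m', n'⟩ hp' heq
        simp only [Finset.mem_coe] at hp hp'
        simp only [Prod.mk.injEq] at heq
        obtain ⟨heq1, heq2⟩ := heq
        obtain ⟨-, htm, hm1, -, hn1, -⟩ := hmem _ hp
        obtain ⟨-, htm', hm1', -, hn1', -⟩ := hmem _ hp'
        have hmm : m = m' := by
          have e1 : t * (m / t) = m := Nat.mul_div_cancel' htm
          have e2 : t * (m' / t) = m' := Nat.mul_div_cancel' htm'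
          rw [← e1, ← e2, heq1]
        have hqd := hdiff _ _ hp hp' hmm
        have hnn : n = n' := by
          rcases Nat.le_total n n' with hle | hle
          · refine div_eq_div_imp_eq q n n' hq0 hle ?_ heq2 hn1
            have h8 : ((q:ℕ):ℤ) ∣ (n':ℤ) - (n:ℤ) := by
              have h9 := dvd_neg.mpr hqd
              simpa using h9
            have : ((q:ℕ):ℤ) ∣ ((n' - n : ℕ) : ℤ) := by
              rw [Int.ofNat_sub hle]
              exact h8
            exact Int.natCast_dvd_natCast.mp this
          · exact (div_eq_div_imp_eq q n' n hq0 hle (by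
              have : ((q:ℕ):ℤ) ∣ ((n - n' : ℕ) : ℤ) := by
                rw [Int.ofNat_sub hle]
                exact hqd
              exact Int.natCast_dvd_natCast.mp this) heq2.symm hn1').symm
        exact Prod.ext hmm hnn
    rwa [Finset.card_product, Nat.card_Icc, Finset.card_range, Nat.add_sub_cancel] at h7
  -- arithmetic
  have ht0' : (0:ℝ) < (t:ℝ) := by exact_mod_cast ht0
  have hq0' : (0:ℝ) < (q:ℝ) := by exact_mod_cast hq0
  have r1 : ((M/t : ℕ):ℝ) ≤ (M:ℝ)/(t:ℝ) := Nat.cast_div_le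
  have r2 : (((M-1)/q : ℕ):ℝ) ≤ (M:ℝ)/(q:ℝ) := by
    calc (((M-1)/q : ℕ):ℝ) ≤ ((M/q : ℕ):ℝ) := by
          exact_mod_cast Nat.div_le_div_right (Nat.sub_le M 1)
      _ ≤ (M:ℝ)/(q:ℝ) := Nat.cast_div_le
  have r3 : (S.card : ℝ) ≤ ((M:ℝ)/t) * ((M:ℝ)/q + 1) := by
    calc (S.card:ℝ) ≤ (((M/t)*((M-1)/q+1) : ℕ):ℝ) := by exact_mod_cast hcard
      _ = ((M/t:ℕ):ℝ) * ((((M-1)/q:ℕ):ℝ) + 1) := by push_cast; ring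
      _ ≤ ((M:ℝ)/t) * ((M:ℝ)/q + 1) := by
          apply mul_le_mul r1 (by linarith) (by positivity) (by positivity)
  have r4 : ((M:ℝ)/t) * ((M:ℝ)/q + 1) = (M:ℝ)^2/((t:ℝ)*(q:ℝ)) + (M:ℝ)/t := by
    field_simp
  have hts'' : (t:ℝ)*(q:ℝ) = (s:ℝ) := by exact_mod_cast hstq.symm
  have r5 : (M:ℝ)/t ≤ (M:ℝ) := by
    apply div_le_self (by positivity)
    exact_mod_cast ht0
  have hd0' : (0:ℝ) < (d:ℝ) := by exact_mod_cast hd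
  have hd2 : (0:ℝ) < (d:ℝ)^((1:ℝ)/2) := Real.rpow_pos_of_pos hd0' _
  have hd3 : (d:ℝ)^((1:ℝ)/2) ≤ (s:ℝ) := by
    rw [← Real.sqrt_eq_rpow]
    have h10 : (d:ℝ) ≤ ((s:ℝ))^2 := by exact_mod_cast hds
    have h11 := Real.sqrt_le_sqrt h10
    rwa [Real.sqrt_sq (by positivity)] at h11
  have r6 : (M:ℝ)^2/(s:ℝ) ≤ (M:ℝ)^2/(d:ℝ)^((1:ℝ)/2) :=
    div_le_div_of_nonneg_left (by positivity) hd2 hd3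
  have r7 : (S.card : ℝ) ≤ (M:ℝ)^2/(d:ℝ)^((1:ℝ)/2) + (M:ℝ) := by
    calc (S.card : ℝ) ≤ ((M:ℝ)/t) * ((M:ℝ)/q + 1) := r3
      _ = (M:ℝ)^2/((t:ℝ)*(q:ℝ)) + (M:ℝ)/t := r4
      _ = (M:ℝ)^2/(s:ℝ) + (M:ℝ)/t := by rw [hts'']
      _ ≤ (M:ℝ)^2/(d:ℝ)^((1:ℝ)/2) + (M:ℝ) := add_le_add r6 r5
  have r8 : (1:ℝ) ≤ (d:ℝ)^ε := Real.one_le_rpow (by exact_mod_cast hd) hε.le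
  rw [one_mul]
  calc (S.card : ℝ) ≤ (M:ℝ)^2/(d:ℝ)^((1:ℝ)/2) + (M:ℝ) := r7
    _ ≤ (d:ℝ)^ε * ((M:ℝ)^2/(d:ℝ)^((1:ℝ)/2) + (M:ℝ)) := le_mul_of_one_le_left (by positivity) r8
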